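/- Let q be a probability density on ℝ^n, let k : ℝ^n → ℝ^n → ℝ be a perturbation kernel such that for every x₀ the map x ↦ k x x₀ is a positive, continuously differentiable probability density, and let q̃ x = ∫ k x x₀ · q x₀ dx₀ be the perturbed marginal, assumed positive and differentiable with ∇ q̃ x = ∫ ∇ₓ k x x₀ · q x₀ dx₀. Then for every vector field s : ℝ^n → ℝ^n with all the integrals below finite, the denoising score matching objective equals the explicit score matching objective up to a constant independent of s: ∬ q x₀ · k x x₀ · ‖ s x − ∇ₓ log (k x x₀) ‖² dx dx₀ = ∫ q̃ x · ‖ s x − ∇ log (q̃ x) ‖² dx + C, where C = ∬ q x₀ · k x x₀ · ‖∇ₓ log (k x x₀)‖² dx dx₀ − ∫ q̃ x · ‖∇ log (q̃ x)‖² dx does not depend on s. In particular, among all such vector fields, the denoising objective is minimized exactly by the marginal score s x = ∇ log (q̃ x). -/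

import Mathlib

open MeasureTheory Real Filter Function

/-- gradient of `log ∘ f`. -/
lemma gradient_log_comp {F : Type*} [NormedAddCommGroup F] [InnerProductSpace ℝ F]
    [CompleteSpace F] {f : F → ℝ} {x : F} (hf : DifferentiableAt ℝ f x) (hx : f x ≠ 0) :
    gradient (fun y => Real.log (f y)) x = (f x)⁻¹ • gradient f x := by
  have h1 : HasFDerivAt f ((InnerProductSpace.toDual ℝ F) (gradient f x)) x :=
    hasGradientAt_iff_hasFDerivAt.1 hf.hasGradientAt
  have h2 := h1.log hx
  have h3 : HasGradientAt (fun y => Real.log (f y)) ((f x)⁻¹ • gradient f x) x := by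
    rw [hasGradientAt_iff_hasFDerivAt]
    have : (InnerProductSpace.toDual ℝ F) ((f x)⁻¹ • gradient f x)
        = (f x)⁻¹ • (InnerProductSpace.toDual ℝ F) (gradient f x) := by
      ext v
      simp [inner_smul_left]
    rw [this]
    exact h2
  exact h3.gradient

/-- Carathéodory: continuous in the first variable, a.e.-strongly-measurable in the
second variable implies jointly a.e.-strongly-measurable. -/
lemma aestronglyMeasurable_uncurry_of_continuous_of_ae
    {X α β : Type*} [TopologicalSpace X] [TopologicalSpace.MetrizableSpace X]
    [MeasurableSpace X] [SecondCountableTopology X] [OpensMeasurableSpace X]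
    [MeasurableSpace α] [TopologicalSpace β] [TopologicalSpace.PseudoMetrizableSpace β]
    {μ : Measure X} {ν : Measure α} [SFinite μ] [SFinite ν]
    {u : X → α → β} (hu_cont : ∀ a, Continuous fun x => u x a)
    (h : ∀ x, AEStronglyMeasurable (u x) ν) :
    AEStronglyMeasurable (fun p : X × α => u p.1 p.2) (μ.prod ν) := by
  classical
  set g : X → α → β := fun x => (h x).mk (u x) with hg_def
  have hg : ∀ x, StronglyMeasurable (g x) := fun x => (h x).stronglyMeasurable_mk
  have heq : ∀ x, u x =ᵐ[ν] g x := fun x => (h x).ae_eq_mk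
  obtain ⟨t_sf, ht_sf⟩ :
      ∃ t : ℕ → SimpleFunc X X, ∀ j a, Tendsto (fun n => u (t n j) a) atTop (nhds <| u j a) := by
    have h_str_meas : StronglyMeasurable (id : X → X) := stronglyMeasurable_id
    refine ⟨h_str_meas.approx, fun j a => ?_⟩
    exact ((hu_cont a).tendsto j).comp (h_str_meas.tendsto_approx j)
  refine aestronglyMeasurable_of_tendsto_ae atTop
    (f := fun n (p : X × α) => u (t_sf n p.1) p.2) (fun n => ?_)
    (Eventually.of_forall fun p => ht_sf p.1 p.2)
  -- each approximant is a.e. strongly measurable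
  have h_str : StronglyMeasurable fun p : X × α => g (t_sf n p.1) p.2 := by
    borelize β
    have h_str_meas : StronglyMeasurable fun p : (t_sf n).range × α => g (↑p.fst) p.snd := by
      refine stronglyMeasurable_iff_measurable_separable.2 ⟨?_, ?_⟩
      · have :
            (fun p : ↥(t_sf n).range × α => g (↑p.fst) p.snd) =
              (fun p : α × (t_sf n).range => g (↑p.snd) p.fst) ∘ Prod.swap := rfl
        rw [this, measurable_swap_iff]
        exact measurable_from_prod_countable_left fun j => (hg j).measurable
      · have : TopologicalSpace.IsSeparable (⋃ i : (t_sf n).range, Set.range (g i)) :=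
          .iUnion fun i => (hg i).isSeparable_range
        apply this.mono
        rintro _ ⟨⟨i, x⟩, rfl⟩
        simp only [Set.mem_iUnion, Set.mem_range]
        exact ⟨i, x, rfl⟩
    have :
        (fun p : X × α => g (t_sf n p.1) p.2) =
          (fun p : ↥(t_sf n).range × α => g p.fst p.snd) ∘ fun p : X × α =>
            (⟨t_sf n p.fst, SimpleFunc.mem_range_self _ _⟩, p.snd) := rfl
    rw [this]
    exact h_str_meas.comp_measurable
      (Measurable.prodMk (((t_sf n).measurable.comp measurable_fst).subtype_mk) measurable_snd)
  refine ⟨fun p => g (t_sf n p.1) p.2, h_str, ?_⟩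
  -- a.e. equality
  have hnull : ∀ x ∈ (t_sf n).range, ν {a | u x a ≠ g x a} = 0 := by
    intro x _
    exact heq x
  set N : Set α := ⋃ x ∈ (t_sf n).range, {a | u x a ≠ g x a} with hN
  have hNnull : ν N = 0 := by
    rw [hN]
    exact (measure_biUnion_null_iff ((t_sf n).range.countable_toSet)).2 hnull
  have hsub : {p : X × α | ¬ u (t_sf n p.1) p.2 = g (t_sf n p.1) p.2} ⊆ Set.univ ×ˢ N := by
    intro p hp
    refine ⟨trivial, ?_⟩
    rw [hN]
    exact Set.mem_biUnion (SimpleFunc.mem_range_self _ _) hp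
  refine (measure_mono_null hsub ?_)
  rw [Measure.prod_prod, hNnull, mul_zero]

open scoped ENNReal

set_option maxHeartbeats 2000000 in
/-- **Denoising score matching equals explicit score matching up to a constant.**
For a probability density `q`, a perturbation kernel `k` (for each `x₀`,
`x ↦ k x x₀` a positive C¹ probability density), and the perturbed marginal
`q̃ x = ∫ k x x₀ · q x₀ dx₀` (positive, differentiable under the integral sign),
every vector field `s` with the stated integrabilities satisfies
`∬ q·k·‖s x − ∇ₓ log k x x₀‖² = ∫ q̃·‖s − ∇ log q̃‖² + C`, where
`C = ∬ q·k·‖∇ₓ log k x x₀‖² − ∫ q̃·‖∇ log q̃‖²` does not depend on `s`;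
in particular the denoising objective is minimized by the marginal score. -/
theorem denoising_score_matching_equals_explicit
    (n : ℕ)
    (q : EuclideanSpace ℝ (Fin n) → ℝ)
    (k : EuclideanSpace ℝ (Fin n) → EuclideanSpace ℝ (Fin n) → ℝ)
    (hq_nonneg : ∀ x₀, 0 ≤ q x₀)
    (hq_prob : ∫ x₀, q x₀ = 1)
    (hk_pos : ∀ x x₀, 0 < k x x₀)
    (hk_c1 : ∀ x₀, ContDiff ℝ 1 (fun x => k x x₀))
    (hk_prob : ∀ x₀, ∫ x, k x x₀ = 1)
    (qt : EuclideanSpace ℝ (Fin n) → ℝ)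
    (hqt : ∀ x, qt x = ∫ x₀, k x x₀ * q x₀)
    (hqt_pos : ∀ x, 0 < qt x)
    (hqt_diff : Differentiable ℝ qt)
    (hqt_grad : ∀ x, gradient qt x = ∫ x₀, q x₀ • gradient (fun x' => k x' x₀) x)
    (s : EuclideanSpace ℝ (Fin n) → EuclideanSpace ℝ (Fin n))
    (hint_dsm : Integrable (fun z : EuclideanSpace ℝ (Fin n) × EuclideanSpace ℝ (Fin n) =>
      q z.2 * k z.1 z.2 * ‖s z.1 - gradient (fun x' => Real.log (k x' z.2)) z.1‖ ^ 2))
    (hint_esm : Integrable (fun x : EuclideanSpace ℝ (Fin n) =>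
      qt x * ‖s x - gradient (fun x' => Real.log (qt x')) x‖ ^ 2))
    (hint_ck : Integrable (fun z : EuclideanSpace ℝ (Fin n) × EuclideanSpace ℝ (Fin n) =>
      q z.2 * k z.1 z.2 * ‖gradient (fun x' => Real.log (k x' z.2)) z.1‖ ^ 2))
    (hint_cq : Integrable (fun x : EuclideanSpace ℝ (Fin n) =>
      qt x * ‖gradient (fun x' => Real.log (qt x')) x‖ ^ 2)) :
    (∫ x₀, ∫ x, q x₀ * k x x₀ * ‖s x - gradient (fun x' => Real.log (k x' x₀)) x‖ ^ 2) =
      (∫ x, qt x * ‖s x - gradient (fun x' => Real.log (qt x')) x‖ ^ 2) +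
        ((∫ x₀, ∫ x, q x₀ * k x x₀ * ‖gradient (fun x' => Real.log (k x' x₀)) x‖ ^ 2) -
          ∫ x, qt x * ‖gradient (fun x' => Real.log (qt x')) x‖ ^ 2) ∧
    (∫ x₀, ∫ x, q x₀ * k x x₀ *
        ‖gradient (fun x' => Real.log (qt x')) x -
            gradient (fun x' => Real.log (k x' x₀)) x‖ ^ 2) ≤
      ∫ x₀, ∫ x, q x₀ * k x x₀ * ‖s x - gradient (fun x' => Real.log (k x' x₀)) x‖ ^ 2 := by
  have hkdiff : ∀ x₀, Differentiable ℝ (fun x' => k x' x₀) :=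
    fun x₀ => (hk_c1 x₀).differentiable one_ne_zero
  have hb : ∀ x x₀, gradient (fun x' => Real.log (k x' x₀)) x
      = (k x x₀)⁻¹ • gradient (fun x' => k x' x₀) x :=
    fun x x₀ => gradient_log_comp (hkdiff x₀ x) (hk_pos x x₀).ne'
  have ha : ∀ x, gradient (fun x' => Real.log (qt x')) x = (qt x)⁻¹ • gradient qt x :=
    fun x => gradient_log_comp (hqt_diff x) (hqt_pos x).ne'
  have hA : ∀ x, Integrable (fun x₀ => k x x₀ * q x₀) := by
    intro x; by_contra hcon
    exact (hqt_pos x).ne' (by rw [hqt x, integral_undef hcon])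
  have hk_int : ∀ x₀, Integrable (fun x => k x x₀) := by
    intro x₀; by_contra hcon
    exact one_ne_zero ((hk_prob x₀).symm.trans (integral_undef hcon))
  have hq_int : Integrable q := by
    by_contra hcon
    exact one_ne_zero (hq_prob.symm.trans (integral_undef hcon))
  -- pointwise expansion of the DSM integrand
  have P1 : ∀ (x x₀ v : EuclideanSpace ℝ (Fin n)),
      q x₀ * k x x₀ * ‖v - gradient (fun x' => Real.log (k x' x₀)) x‖ ^ 2
        = k x x₀ * q x₀ * ‖v‖ ^ 2
          - 2 * (inner ℝ v (q x₀ • gradient (fun x' => k x' x₀) x) : ℝ)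
          + q x₀ * k x x₀ * ‖gradient (fun x' => Real.log (k x' x₀)) x‖ ^ 2 := by
    intro x x₀ v
    have hk0 : k x x₀ ≠ 0 := (hk_pos x x₀).ne'
    rw [norm_sub_sq_real, hb x x₀, real_inner_smul_right, real_inner_smul_right]
    field_simp
  -- pointwise expansion of the ESM integrand
  have P2 : ∀ (x v : EuclideanSpace ℝ (Fin n)),
      qt x * ‖v - gradient (fun x' => Real.log (qt x')) x‖ ^ 2
        = qt x * ‖v‖ ^ 2 - 2 * (inner ℝ v (gradient qt x) : ℝ)
          + qt x * ‖gradient (fun x' => Real.log (qt x')) x‖ ^ 2 := by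
    intro x v
    have h0 : qt x ≠ 0 := (hqt_pos x).ne'
    rw [norm_sub_sq_real, ha x, real_inner_smul_right]
    field_simp
  -- joint a.e. measurability of the kernel times density
  have hK : AEStronglyMeasurable
      (fun z : EuclideanSpace ℝ (Fin n) × EuclideanSpace ℝ (Fin n) => k z.1 z.2 * q z.2)
      ((volume : Measure (EuclideanSpace ℝ (Fin n))).prod volume) :=
    aestronglyMeasurable_uncurry_of_continuous_of_ae
      (fun x₀ => ((hk_c1 x₀).continuous.mul continuous_const))
      (fun x => (hA x).aestronglyMeasurable)
  -- continuity of the kernel gradient in the first variable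
  have hgk_cont : ∀ x₀, Continuous (fun x => gradient (fun x' => k x' x₀) x) := by
    intro x₀
    have h1 : Continuous (fun x => fderiv ℝ (fun x' => k x' x₀) x) :=
      (hk_c1 x₀).continuous_fderiv one_ne_zero
    exact (InnerProductSpace.toDual ℝ (EuclideanSpace ℝ (Fin n))).symm.continuous.comp h1
  -- measurability in x₀ (for each fixed x) of the weighted kernel gradient
  have hVsec_meas : ∀ x, AEStronglyMeasurable
      (fun x₀ => q x₀ • gradient (fun x' => k x' x₀) x) (volume : Measure (EuclideanSpace ℝ (Fin n))) := by
    intro x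
    set e : Fin n → EuclideanSpace ℝ (Fin n) := fun i => EuclideanSpace.single i 1 with he
    refine aestronglyMeasurable_of_tendsto_ae Filter.atTop
      (f := fun (j : ℕ) (x₀ : EuclideanSpace ℝ (Fin n)) => ∑ i : Fin n,
        (((j : ℝ) + 1) * (k (x + ((j : ℝ) + 1)⁻¹ • e i) x₀ * q x₀ - k x x₀ * q x₀)) • e i)
      (fun j => ?_) (Filter.Eventually.of_forall fun x₀ => ?_)
    · refine Finset.aestronglyMeasurable_fun_sum _ (fun i _ => ?_)
      exact ((((hA _).aestronglyMeasurable.sub (hA x).aestronglyMeasurable).const_mul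
        _).smul aestronglyMeasurable_const)
    · -- convergence of difference quotients
      have hrepr : q x₀ • gradient (fun x' => k x' x₀) x
          = ∑ i : Fin n, (q x₀ * fderiv ℝ (fun x' => k x' x₀) x (e i)) • e i := by
        have hfd : fderiv ℝ (fun x' => k x' x₀) x
            = (InnerProductSpace.toDual ℝ (EuclideanSpace ℝ (Fin n)))
                (gradient (fun x' => k x' x₀) x) := by
          simp [gradient, LinearIsometryEquiv.apply_symm_apply]
        have hcoord : ∀ i : Fin n, fderiv ℝ (fun x' => k x' x₀) x (e i)
            = (inner ℝ (e i) (gradient (fun x' => k x' x₀) x) : ℝ) := by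
          intro i
          rw [hfd, InnerProductSpace.toDual_apply_apply, real_inner_comm]
        have hsum := (EuclideanSpace.basisFun (Fin n) ℝ).sum_repr'
          (gradient (fun x' => k x' x₀) x)
        calc q x₀ • gradient (fun x' => k x' x₀) x
            = q x₀ • ∑ i : Fin n, (inner ℝ ((EuclideanSpace.basisFun (Fin n) ℝ) i)
                (gradient (fun x' => k x' x₀) x) : ℝ) • (EuclideanSpace.basisFun (Fin n) ℝ) i := by
              rw [hsum]
          _ = ∑ i : Fin n, (q x₀ * fderiv ℝ (fun x' => k x' x₀) x (e i)) • e i := by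
              rw [Finset.smul_sum]
              refine Finset.sum_congr rfl (fun i _ => ?_)
              rw [hcoord i, smul_smul]
              simp [he, EuclideanSpace.basisFun_apply]
      rw [hrepr]
      refine tendsto_finset_sum _ (fun i _ => ?_)
      have hder : HasDerivAt (fun t : ℝ => k (x + t • e i) x₀)
          (fderiv ℝ (fun x' => k x' x₀) x (e i)) 0 := by
        have h0 : HasDerivAt (fun t : ℝ => x + t • e i) (e i) 0 := by
          simpa using ((hasDerivAt_id (0 : ℝ)).smul_const (e i)).const_add x
        have h1 : HasFDerivAt (fun x' => k x' x₀) (fderiv ℝ (fun x' => k x' x₀) x)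
            (x + (0 : ℝ) • e i) := by
          simpa using (hkdiff x₀ x).hasFDerivAt
        exact h1.comp_hasDerivAt 0 h0
      have hslope := hasDerivAt_iff_tendsto_slope.1 hder
      have hseq : Filter.Tendsto (fun j : ℕ => ((j : ℝ) + 1)⁻¹) Filter.atTop
          (nhdsWithin 0 {(0 : ℝ)}ᶜ) := by
        refine tendsto_nhdsWithin_of_tendsto_nhds_of_eventually_within _
          (tendsto_one_div_add_atTop_nhds_zero_nat.congr (fun j => one_div _))
          (Filter.Eventually.of_forall fun j => ?_)
        simp only [Set.mem_compl_iff, Set.mem_singleton_iff]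
        positivity
      have hcomp := hslope.comp hseq
      have heq : ∀ j : ℕ,
          (((j : ℝ) + 1) * (k (x + ((j : ℝ) + 1)⁻¹ • e i) x₀ * q x₀ - k x x₀ * q x₀))
            = q x₀ * slope (fun t : ℝ => k (x + t • e i) x₀) 0 (((j : ℝ) + 1)⁻¹) := by
        intro j
        have hj : ((j : ℝ) + 1) ≠ 0 := by positivity
        rw [slope_def_field]
        simp only [zero_smul, add_zero, sub_zero]
        field_simp
      have := (hcomp.const_mul (q x₀)).congr (fun j => (heq j).symm)
      exact this.smul_const (e i)
  -- joint measurability of the weighted kernel gradient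
  have hV : AEStronglyMeasurable
      (fun z : EuclideanSpace ℝ (Fin n) × EuclideanSpace ℝ (Fin n) =>
        q z.2 • gradient (fun x' => k x' z.2) z.1)
      ((volume : Measure (EuclideanSpace ℝ (Fin n))).prod volume) :=
    aestronglyMeasurable_uncurry_of_continuous_of_ae
      (u := fun x x₀ => q x₀ • gradient (fun x' => k x' x₀) x)
      (fun x₀ => continuous_const.fun_smul (hgk_cont x₀)) hVsec_meas
  -- the product of kernel and density is integrable on the product space
  have hKint : Integrable
      (fun z : EuclideanSpace ℝ (Fin n) × EuclideanSpace ℝ (Fin n) => k z.1 z.2 * q z.2)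
      ((volume : Measure (EuclideanSpace ℝ (Fin n))).prod volume) := by
    refine ⟨hK, ?_⟩
    have hnn : 0 ≤ᵐ[(volume : Measure (EuclideanSpace ℝ (Fin n))).prod volume]
        (fun z : EuclideanSpace ℝ (Fin n) × EuclideanSpace ℝ (Fin n) => k z.1 z.2 * q z.2) :=
      Filter.Eventually.of_forall fun z => mul_nonneg (hk_pos _ _).le (hq_nonneg _)
    rw [hasFiniteIntegral_iff_ofReal hnn]
    rw [lintegral_prod_symm
      (fun z : EuclideanSpace ℝ (Fin n) × EuclideanSpace ℝ (Fin n) =>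
        ENNReal.ofReal (k z.1 z.2 * q z.2)) hK.aemeasurable.ennreal_ofReal]
    have inner_eq : ∀ x₀, (∫⁻ x, ENNReal.ofReal (k x x₀ * q x₀)) = ENNReal.ofReal (q x₀) := by
      intro x₀
      rw [← ofReal_integral_eq_lintegral_ofReal ((hk_int x₀).mul_const (q x₀))
        (Filter.Eventually.of_forall fun x => mul_nonneg (hk_pos _ _).le (hq_nonneg _))]
      rw [integral_mul_const, hk_prob x₀, one_mul]
    calc ∫⁻ x₀, ∫⁻ x, ENNReal.ofReal (k x x₀ * q x₀)
        = ∫⁻ x₀, ENNReal.ofReal (q x₀) := lintegral_congr inner_eq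
      _ = ENNReal.ofReal 1 := by
          rw [← ofReal_integral_eq_lintegral_ofReal hq_int
            (Filter.Eventually.of_forall hq_nonneg), hq_prob]
      _ < ⊤ := ENNReal.ofReal_lt_top
  -- the weighted kernel gradient is integrable on the product space
  have hVint : Integrable
      (fun z : EuclideanSpace ℝ (Fin n) × EuclideanSpace ℝ (Fin n) =>
        q z.2 • gradient (fun x' => k x' z.2) z.1)
      ((volume : Measure (EuclideanSpace ℝ (Fin n))).prod volume) := by
    refine Integrable.mono' ((hKint.const_mul (2 : ℝ)⁻¹).add (hint_ck.const_mul (2 : ℝ)⁻¹)) hV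
      (Filter.Eventually.of_forall fun z => ?_)
    have hgk : gradient (fun x' => k x' z.2) z.1
        = k z.1 z.2 • gradient (fun x' => Real.log (k x' z.2)) z.1 := by
      rw [hb z.1 z.2, smul_inv_smul₀ (hk_pos z.1 z.2).ne']
    rw [norm_smul, hgk, norm_smul]
    simp only [Real.norm_eq_abs, abs_of_nonneg (hq_nonneg z.2),
      abs_of_nonneg (hk_pos z.1 z.2).le]
    have hbn : (0 : ℝ) ≤ ‖gradient (fun x' => Real.log (k x' z.2)) z.1‖ := norm_nonneg _
    simp only [Pi.add_apply]
    nlinarith [sq_nonneg (‖gradient (fun x' => Real.log (k x' z.2)) z.1‖ - 1),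
      mul_nonneg (hq_nonneg z.2) (hk_pos z.1 z.2).le]
  have hVsec : ∀ᵐ x ∂(volume : Measure (EuclideanSpace ℝ (Fin n))),
      Integrable (fun x₀ => q x₀ • gradient (fun x' => k x' x₀) x) volume :=
    hVint.prod_right_ae
  have hBsec : ∀ᵐ x ∂(volume : Measure (EuclideanSpace ℝ (Fin n))),
      Integrable (fun x₀ => q x₀ * k x x₀ *
        ‖gradient (fun x' => Real.log (k x' x₀)) x‖ ^ 2) volume :=
    hint_ck.prod_right_ae
  -- the key a.e. identity
  have MI : ∀ᵐ x ∂(volume : Measure (EuclideanSpace ℝ (Fin n))),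
      ∀ v : EuclideanSpace ℝ (Fin n),
      (∫ x₀, q x₀ * k x x₀ * ‖v - gradient (fun x' => Real.log (k x' x₀)) x‖ ^ 2)
        = qt x * ‖v - gradient (fun x' => Real.log (qt x')) x‖ ^ 2
          + ((∫ x₀, q x₀ * k x x₀ * ‖gradient (fun x' => Real.log (k x' x₀)) x‖ ^ 2)
              - qt x * ‖gradient (fun x' => Real.log (qt x')) x‖ ^ 2) := by
    filter_upwards [hVsec, hBsec] with x hVx hBx
    intro v
    have h1 : Integrable (fun x₀ => k x x₀ * q x₀ * ‖v‖ ^ 2) := (hA x).mul_const _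
    have h2 : Integrable (fun x₀ =>
        2 * (inner ℝ v (q x₀ • gradient (fun x' => k x' x₀) x) : ℝ)) :=
      (hVx.const_inner v).const_mul 2
    calc (∫ x₀, q x₀ * k x x₀ * ‖v - gradient (fun x' => Real.log (k x' x₀)) x‖ ^ 2)
        = ∫ x₀, (k x x₀ * q x₀ * ‖v‖ ^ 2
            - 2 * (inner ℝ v (q x₀ • gradient (fun x' => k x' x₀) x) : ℝ)
            + q x₀ * k x x₀ * ‖gradient (fun x' => Real.log (k x' x₀)) x‖ ^ 2) :=
          integral_congr_ae (Filter.Eventually.of_forall fun x₀ => P1 x x₀ v)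
      _ = (∫ x₀, (k x x₀ * q x₀ * ‖v‖ ^ 2
            - 2 * (inner ℝ v (q x₀ • gradient (fun x' => k x' x₀) x) : ℝ)))
            + ∫ x₀, q x₀ * k x x₀ * ‖gradient (fun x' => Real.log (k x' x₀)) x‖ ^ 2 :=
          integral_add (h1.sub h2) hBx
      _ = (∫ x₀, k x x₀ * q x₀ * ‖v‖ ^ 2)
            - (∫ x₀, 2 * (inner ℝ v (q x₀ • gradient (fun x' => k x' x₀) x) : ℝ))
            + ∫ x₀, q x₀ * k x x₀ * ‖gradient (fun x' => Real.log (k x' x₀)) x‖ ^ 2 := by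
          rw [integral_sub h1 h2]
      _ = qt x * ‖v‖ ^ 2 - 2 * (inner ℝ v (gradient qt x) : ℝ)
            + ∫ x₀, q x₀ * k x x₀ * ‖gradient (fun x' => Real.log (k x' x₀)) x‖ ^ 2 := by
          rw [integral_mul_const, ← hqt x, MeasureTheory.integral_const_mul, integral_inner hVx,
            ← hqt_grad x]
      _ = qt x * ‖v - gradient (fun x' => Real.log (qt x')) x‖ ^ 2
          + ((∫ x₀, q x₀ * k x x₀ * ‖gradient (fun x' => Real.log (k x' x₀)) x‖ ^ 2)
              - qt x * ‖gradient (fun x' => Real.log (qt x')) x‖ ^ 2) := by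
          rw [P2 x v]; ring
  have hqt_cont : Continuous qt := hqt_diff.continuous
  have hJint : Integrable (fun x => ∫ x₀, q x₀ * k x x₀ *
      ‖gradient (fun x' => Real.log (k x' x₀)) x‖ ^ 2) volume :=
    hint_ck.integral_prod_left
  -- Goal 1 (the key identity)
  have key : (∫ x₀, ∫ x, q x₀ * k x x₀ * ‖s x - gradient (fun x' => Real.log (k x' x₀)) x‖ ^ 2)
      = (∫ x, qt x * ‖s x - gradient (fun x' => Real.log (qt x')) x‖ ^ 2) +
        ((∫ x₀, ∫ x, q x₀ * k x x₀ * ‖gradient (fun x' => Real.log (k x' x₀)) x‖ ^ 2) -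
          ∫ x, qt x * ‖gradient (fun x' => Real.log (qt x')) x‖ ^ 2) := by
    calc (∫ x₀, ∫ x, q x₀ * k x x₀ * ‖s x - gradient (fun x' => Real.log (k x' x₀)) x‖ ^ 2)
        = ∫ x, ∫ x₀, q x₀ * k x x₀ * ‖s x - gradient (fun x' => Real.log (k x' x₀)) x‖ ^ 2 :=
          (integral_integral_swap hint_dsm).symm
      _ = ∫ x, (qt x * ‖s x - gradient (fun x' => Real.log (qt x')) x‖ ^ 2
            + ((∫ x₀, q x₀ * k x x₀ * ‖gradient (fun x' => Real.log (k x' x₀)) x‖ ^ 2)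
                - qt x * ‖gradient (fun x' => Real.log (qt x')) x‖ ^ 2)) :=
          integral_congr_ae (MI.mono fun x hx => hx (s x))
      _ = (∫ x, qt x * ‖s x - gradient (fun x' => Real.log (qt x')) x‖ ^ 2)
            + ∫ x, ((∫ x₀, q x₀ * k x x₀ * ‖gradient (fun x' => Real.log (k x' x₀)) x‖ ^ 2)
                - qt x * ‖gradient (fun x' => Real.log (qt x')) x‖ ^ 2) :=
          integral_add hint_esm (hJint.sub hint_cq)
      _ = (∫ x, qt x * ‖s x - gradient (fun x' => Real.log (qt x')) x‖ ^ 2)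
            + ((∫ x, ∫ x₀, q x₀ * k x x₀ * ‖gradient (fun x' => Real.log (k x' x₀)) x‖ ^ 2)
                - ∫ x, qt x * ‖gradient (fun x' => Real.log (qt x')) x‖ ^ 2) := by
          rw [integral_sub hJint hint_cq]
      _ = (∫ x, qt x * ‖s x - gradient (fun x' => Real.log (qt x')) x‖ ^ 2) +
          ((∫ x₀, ∫ x, q x₀ * k x x₀ * ‖gradient (fun x' => Real.log (k x' x₀)) x‖ ^ 2) -
            ∫ x, qt x * ‖gradient (fun x' => Real.log (qt x')) x‖ ^ 2) := by
          rw [integral_integral_swap hint_ck]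
  -- measurability of the marginal score
  have haam : AEStronglyMeasurable
      (fun x => gradient (fun x' => Real.log (qt x')) x)
      (volume : Measure (EuclideanSpace ℝ (Fin n))) := by
    have hgradqt : Measurable (fun x => gradient qt x) := by
      have h1 : Measurable (fun x => fderiv ℝ qt x) := measurable_fderiv ℝ qt
      exact ((InnerProductSpace.toDual ℝ
        (EuclideanSpace ℝ (Fin n))).symm.continuous.measurable).comp h1
    have : (fun x => gradient (fun x' => Real.log (qt x')) x)
        = fun x => (qt x)⁻¹ • gradient qt x := funext ha
    rw [this]
    exact ((hqt_cont.measurable.inv).smul hgradqt).aestronglyMeasurable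
  -- measurability of the second-goal integrand
  have hGmeas : AEStronglyMeasurable
      (fun z : EuclideanSpace ℝ (Fin n) × EuclideanSpace ℝ (Fin n) =>
        q z.2 * k z.1 z.2 * ‖gradient (fun x' => Real.log (qt x')) z.1
          - gradient (fun x' => Real.log (k x' z.2)) z.1‖ ^ 2)
      ((volume : Measure (EuclideanSpace ℝ (Fin n))).prod volume) := by
    have hfe : (fun z : EuclideanSpace ℝ (Fin n) × EuclideanSpace ℝ (Fin n) =>
        q z.2 * k z.1 z.2 * ‖gradient (fun x' => Real.log (qt x')) z.1
          - gradient (fun x' => Real.log (k x' z.2)) z.1‖ ^ 2)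
        = fun z => (k z.1 z.2 * q z.2 * ‖gradient (fun x' => Real.log (qt x')) z.1‖ ^ 2
            - 2 * (inner ℝ (gradient (fun x' => Real.log (qt x')) z.1)
                (q z.2 • gradient (fun x' => k x' z.2) z.1) : ℝ)
            + q z.2 * k z.1 z.2 * ‖gradient (fun x' => Real.log (k x' z.2)) z.1‖ ^ 2) :=
      funext fun z => P1 z.1 z.2 _
    rw [hfe]
    have t0 : AEStronglyMeasurable
        (fun z : EuclideanSpace ℝ (Fin n) × EuclideanSpace ℝ (Fin n) =>
          ‖gradient (fun x' => Real.log (qt x')) z.1‖ ^ 2)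
        ((volume : Measure (EuclideanSpace ℝ (Fin n))).prod volume) := by
      have := (haam.comp_fst (ν := (volume : Measure (EuclideanSpace ℝ (Fin n))))).norm
      have h2 := this.mul this
      simpa [← pow_two, Pi.pow_def] using h2
    have t1 := hK.mul t0
    have t2 := ((haam.comp_fst (ν := (volume : Measure (EuclideanSpace ℝ (Fin n))))).inner
      hV).const_mul (2 : ℝ)
    exact (t1.sub t2).add hint_ck.aestronglyMeasurable
  -- integrability of q·k·‖s-a‖²  on the product space
  have hKh : Integrable
      (fun z : EuclideanSpace ℝ (Fin n) × EuclideanSpace ℝ (Fin n) =>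
        k z.1 z.2 * q z.2 * ‖s z.1 - gradient (fun x' => Real.log (qt x')) z.1‖ ^ 2)
      ((volume : Measure (EuclideanSpace ℝ (Fin n))).prod volume) := by
    have hh : AEStronglyMeasurable
        (fun x => ‖s x - gradient (fun x' => Real.log (qt x')) x‖ ^ 2)
        (volume : Measure (EuclideanSpace ℝ (Fin n))) := by
      have hfe : (fun x => ‖s x - gradient (fun x' => Real.log (qt x')) x‖ ^ 2)
          = fun x => (qt x)⁻¹ *
              (qt x * ‖s x - gradient (fun x' => Real.log (qt x')) x‖ ^ 2) := by
        funext x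
        rw [← mul_assoc, inv_mul_cancel₀ (hqt_pos x).ne', one_mul]
      rw [hfe]
      exact (hqt_cont.measurable.inv.aestronglyMeasurable).mul hint_esm.aestronglyMeasurable
    have hmeas : AEStronglyMeasurable
        (fun z : EuclideanSpace ℝ (Fin n) × EuclideanSpace ℝ (Fin n) =>
          k z.1 z.2 * q z.2 * ‖s z.1 - gradient (fun x' => Real.log (qt x')) z.1‖ ^ 2)
        ((volume : Measure (EuclideanSpace ℝ (Fin n))).prod volume) :=
      hK.mul (hh.comp_fst (ν := (volume : Measure (EuclideanSpace ℝ (Fin n)))))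
    rw [integrable_prod_iff hmeas]
    constructor
    · refine Filter.Eventually.of_forall fun x => ?_
      simpa using (hA x).mul_const
        (‖s x - gradient (fun x' => Real.log (qt x')) x‖ ^ 2)
    · have hfe : (fun x => ∫ x₀, ‖k x x₀ * q x₀ *
          ‖s x - gradient (fun x' => Real.log (qt x')) x‖ ^ 2‖)
          = fun x => qt x * ‖s x - gradient (fun x' => Real.log (qt x')) x‖ ^ 2 := by
        funext x
        have : ∀ x₀ : EuclideanSpace ℝ (Fin n), ‖k x x₀ * q x₀ *
            ‖s x - gradient (fun x' => Real.log (qt x')) x‖ ^ 2‖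
            = k x x₀ * q x₀ * ‖s x - gradient (fun x' => Real.log (qt x')) x‖ ^ 2 :=
          fun x₀ => Real.norm_of_nonneg (mul_nonneg
            (mul_nonneg (hk_pos x x₀).le (hq_nonneg x₀)) (by positivity))
        rw [integral_congr_ae (Filter.Eventually.of_forall this), integral_mul_const, ← hqt x]
      rw [hfe]
      exact hint_esm
  -- integrability of the second-goal integrand
  have hGint : Integrable
      (fun z : EuclideanSpace ℝ (Fin n) × EuclideanSpace ℝ (Fin n) =>
        q z.2 * k z.1 z.2 * ‖gradient (fun x' => Real.log (qt x')) z.1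
          - gradient (fun x' => Real.log (k x' z.2)) z.1‖ ^ 2)
      ((volume : Measure (EuclideanSpace ℝ (Fin n))).prod volume) := by
    refine Integrable.mono' ((hKh.const_mul 2).add (hint_dsm.const_mul 2)) hGmeas
      (Filter.Eventually.of_forall fun z => ?_)
    set A := ‖s z.1 - gradient (fun x' => Real.log (qt x')) z.1‖ with hA_def
    set B := ‖s z.1 - gradient (fun x' => Real.log (k x' z.2)) z.1‖ with hB_def
    have hGnn : (0 : ℝ) ≤ q z.2 * k z.1 z.2 * ‖gradient (fun x' => Real.log (qt x')) z.1
        - gradient (fun x' => Real.log (k x' z.2)) z.1‖ ^ 2 :=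
      mul_nonneg (mul_nonneg (hq_nonneg z.2) (hk_pos z.1 z.2).le) (by positivity)
    rw [Real.norm_of_nonneg hGnn]
    simp only [Pi.add_apply]
    have htri : ‖gradient (fun x' => Real.log (qt x')) z.1
        - gradient (fun x' => Real.log (k x' z.2)) z.1‖ ≤ A + B := by
      have hsplit : gradient (fun x' => Real.log (qt x')) z.1
          - gradient (fun x' => Real.log (k x' z.2)) z.1
          = -(s z.1 - gradient (fun x' => Real.log (qt x')) z.1)
            + (s z.1 - gradient (fun x' => Real.log (k x' z.2)) z.1) := by abel
      rw [hsplit]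
      refine (norm_add_le _ _).trans ?_
      rw [norm_neg]
    have hAnn : (0 : ℝ) ≤ A := norm_nonneg _
    have hBnn : (0 : ℝ) ≤ B := norm_nonneg _
    have hCnn : (0 : ℝ) ≤ ‖gradient (fun x' => Real.log (qt x')) z.1
        - gradient (fun x' => Real.log (k x' z.2)) z.1‖ := norm_nonneg _
    have hsq : ‖gradient (fun x' => Real.log (qt x')) z.1
        - gradient (fun x' => Real.log (k x' z.2)) z.1‖ ^ 2 ≤ 2 * A ^ 2 + 2 * B ^ 2 := by
      nlinarith [sq_nonneg (A - B)]
    have hqk : (0 : ℝ) ≤ q z.2 * k z.1 z.2 :=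
      mul_nonneg (hq_nonneg z.2) (hk_pos z.1 z.2).le
    have := mul_le_mul_of_nonneg_left hsq hqk
    nlinarith [this]
  -- conclude
  refine ⟨key, ?_⟩
  have hswapG := (integral_integral_swap (f := fun x x₀ => q x₀ * k x x₀ *
    ‖gradient (fun x' => Real.log (qt x')) x
      - gradient (fun x' => Real.log (k x' x₀)) x‖ ^ 2) hGint).symm
  have hG_eval : (∫ x₀, ∫ x, q x₀ * k x x₀ *
      ‖gradient (fun x' => Real.log (qt x')) x
        - gradient (fun x' => Real.log (k x' x₀)) x‖ ^ 2)
      = (∫ x, ∫ x₀, q x₀ * k x x₀ * ‖gradient (fun x' => Real.log (k x' x₀)) x‖ ^ 2)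
        - ∫ x, qt x * ‖gradient (fun x' => Real.log (qt x')) x‖ ^ 2 := by
    calc (∫ x₀, ∫ x, q x₀ * k x x₀ *
        ‖gradient (fun x' => Real.log (qt x')) x
          - gradient (fun x' => Real.log (k x' x₀)) x‖ ^ 2)
        = ∫ x, ∫ x₀, q x₀ * k x x₀ *
            ‖gradient (fun x' => Real.log (qt x')) x
              - gradient (fun x' => Real.log (k x' x₀)) x‖ ^ 2 := hswapG
      _ = ∫ x, ((∫ x₀, q x₀ * k x x₀ * ‖gradient (fun x' => Real.log (k x' x₀)) x‖ ^ 2)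
            - qt x * ‖gradient (fun x' => Real.log (qt x')) x‖ ^ 2) := by
          refine integral_congr_ae (MI.mono fun x hx => ?_)
          have := hx (gradient (fun x' => Real.log (qt x')) x)
          simpa using this
      _ = (∫ x, ∫ x₀, q x₀ * k x x₀ * ‖gradient (fun x' => Real.log (k x' x₀)) x‖ ^ 2)
            - ∫ x, qt x * ‖gradient (fun x' => Real.log (qt x')) x‖ ^ 2 :=
          integral_sub hJint hint_cq
  have hESMnn : (0 : ℝ) ≤ ∫ x, qt x * ‖s x - gradient (fun x' => Real.log (qt x')) x‖ ^ 2 :=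
    integral_nonneg fun x => mul_nonneg (hqt_pos x).le (by positivity)
  have hswapck := integral_integral_swap (f := fun x x₀ => q x₀ * k x x₀ *
    ‖gradient (fun x' => Real.log (k x' x₀)) x‖ ^ 2) hint_ck
  rw [key, hG_eval, hswapck]
  linarith
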